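/- Let x ∈ Q(R) be dominant and let z ∈ Q(R) satisfy ⟨z, ϖ_i⟩ ≤ ⟨x, ϖ_i⟩ for all i ∈ I. Suppose i₁, …, i_k ∈ I are distinct indices such that (b) ⟨z, α_{i₁}^∨⟩ = −1, (c) ⟨z, α_{i_j}^∨⟩ = 0 for j = 2, …, k, and (d) ⟨α_{i_j}, α_{i_{j+1}}^∨⟩ = −1 for j = 1, …, k−1, and suppose that z' := z + α_{i₁} + α_{i₂} + ⋯ + α_{i_k} is dominant. Then ⟨z', ϖ_i⟩ ≤ ⟨x, ϖ_i⟩ for all i ∈ I. -/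

import Mathlib

open Module

/-- An irreducible reduced (crystallographic) root system `R` in a real vector space `V`
(playing the role of `Q(R) ⊗ ℝ`), together with a base of simple roots indexed by `ι`,
the coroot pairings `u ↦ ⟨u, α^∨⟩` realised as linear functionals, and the fundamental
coweights `ϖ_i`, characterised by `⟨ϖ_i, α_j⟩ = δ_{ij}`. -/
structure RootSystemData (ι : Type*) (V : Type*) [Fintype ι] [DecidableEq ι]
    [AddCommGroup V] [Module ℝ V] where
  /-- the set of roots `R` -/
  isRoot : Set V
  /-- the coroot pairing: `coroot a u = ⟨u, a^∨⟩` -/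
  coroot : V → (V →ₗ[ℝ] ℝ)
  /-- the simple roots `α_i` -/
  sroot : ι → V
  sroot_mem : ∀ i, sroot i ∈ isRoot
  coroot_self : ∀ a ∈ isRoot, coroot a a = 2
  crystallographic : ∀ a ∈ isRoot, ∀ b ∈ isRoot, ∃ n : ℤ, coroot a b = (n : ℝ)
  reflect_mem : ∀ a ∈ isRoot, ∀ b ∈ isRoot, b - coroot a b • a ∈ isRoot
  reduced : ∀ a ∈ isRoot, ∀ t : ℝ, t • a ∈ isRoot → t = 1 ∨ t = -1
  finite : isRoot.Finite
  ne_zero : ∀ a ∈ isRoot, a ≠ 0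
  span_top : Submodule.span ℝ isRoot = ⊤
  /-- every root is a nonnegative or nonpositive integral combination of the simple roots -/
  base : ∀ a ∈ isRoot, (∃ c : ι → ℕ, a = ∑ i, (c i : ℝ) • sroot i) ∨
    (∃ c : ι → ℕ, a = -∑ i, (c i : ℝ) • sroot i)
  /-- the root system is irreducible -/
  irreducible : ∀ s t : Set V, isRoot = s ∪ t →
    (∀ a ∈ s, ∀ b ∈ t, coroot a b = 0) → s = ∅ ∨ t = ∅
  /-- the fundamental coweights `ϖ_i`, as linear functionals `u ↦ ⟨u, ϖ_i⟩` -/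
  coweight : ι → (V →ₗ[ℝ] ℝ)
  coweight_sroot : ∀ i j, coweight i (sroot j) = if i = j then 1 else 0

namespace RootSystemData

variable {ι V : Type*} [Fintype ι] [DecidableEq ι] [AddCommGroup V] [Module ℝ V]
variable (P : RootSystemData ι V)

/-- The root lattice `Q(R)`, i.e. the `ℤ`-span of the roots. -/
def rootLattice : AddSubgroup V := AddSubgroup.closure P.isRoot

/-- The Weyl group `W`, generated by the reflections in the roots. -/
def weylGroup : Subgroup (V ≃ₗ[ℝ] V) :=
  Subgroup.closure { w | ∃ a, ∃ ha : a ∈ P.isRoot, w = Module.reflection (P.coroot_self a ha) }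

/-- The Weyl orbit `O_x = {wx : w ∈ W}` of an element `x`. -/
def orbit (x : V) : Set V := { v | ∃ w ∈ P.weylGroup, v = w x }

/-- An element `u` is dominant if `⟨u, α_i^∨⟩ ≥ 0` for all `i ∈ I`. -/
def IsDominant (u : V) : Prop := ∀ i, 0 ≤ P.coroot (P.sroot i) u

/-- The simple reflection `s_{α_i}`. -/
def sref (i : ι) : V ≃ₗ[ℝ] V :=
  Module.reflection (P.coroot_self (P.sroot i) (P.sroot_mem i))

end RootSystemData


namespace RootSystemData

variable {ι V : Type*} [Fintype ι] [DecidableEq ι] [AddCommGroup V] [Module ℝ V]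
variable (P : RootSystemData ι V)

lemma coweight_sum (c : ι → ℝ) (i : ι) :
    P.coweight i (∑ j, c j • P.sroot j) = c i := by
  rw [map_sum]
  simp only [map_smul, P.coweight_sroot, smul_eq_mul, mul_ite, mul_one, mul_zero]
  simp

lemma sroot_span_top : Submodule.span ℝ (Set.range P.sroot) = ⊤ := by
  rw [eq_top_iff, ← P.span_top, Submodule.span_le]
  intro a ha
  rcases P.base a ha with ⟨c, hc⟩ | ⟨c, hc⟩
  · rw [hc]
    exact Submodule.sum_mem _ fun i _ =>
      Submodule.smul_mem _ _ (Submodule.subset_span ⟨i, rfl⟩)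
  · rw [hc]
    exact neg_mem (Submodule.sum_mem _ fun i _ =>
      Submodule.smul_mem _ _ (Submodule.subset_span ⟨i, rfl⟩))

lemma coweight_repr (v : V) : v = ∑ i, P.coweight i v • P.sroot i := by
  have hL : (LinearMap.id : V →ₗ[ℝ] V)
      = ∑ i, (P.coweight i).smulRight (P.sroot i) := by
    apply LinearMap.ext_on P.sroot_span_top
    rintro _ ⟨j, rfl⟩
    simp only [LinearMap.id_apply, LinearMap.sum_apply, LinearMap.smulRight_apply,
      P.coweight_sroot]
    rw [Finset.sum_eq_single j]
    · simp
    · intro i _ hij; simp [hij]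
    · simp
  calc v = LinearMap.id v := rfl
    _ = ∑ i, P.coweight i v • P.sroot i := by rw [hL]; simp

lemma coweight_int {v : V} (hv : v ∈ P.rootLattice) (i : ι) :
    ∃ n : ℤ, P.coweight i v = n := by
  induction hv using AddSubgroup.closure_induction with
  | mem a ha =>
    rcases P.base a ha with ⟨c, hc⟩ | ⟨c, hc⟩
    · exact ⟨c i, by rw [hc, P.coweight_sum]; push_cast; ring⟩
    · refine ⟨-(c i), ?_⟩
      rw [hc, map_neg, P.coweight_sum]; push_cast; ring
  | zero => exact ⟨0, by simp⟩
  | add a b _ _ ha hb =>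
    obtain ⟨m, hm⟩ := ha; obtain ⟨n, hn⟩ := hb
    exact ⟨m + n, by rw [map_add, hm, hn]; push_cast; ring⟩
  | neg a _ ha =>
    obtain ⟨m, hm⟩ := ha
    exact ⟨-m, by rw [map_neg, hm]; push_cast; ring⟩

lemma offdiag {i j : ι} (h : i ≠ j) : P.coroot (P.sroot j) (P.sroot i) ≤ 0 := by
  set n := P.coroot (P.sroot j) (P.sroot i) with hn
  have hβ : P.sroot i - n • P.sroot j ∈ P.isRoot :=
    P.reflect_mem _ (P.sroot_mem j) _ (P.sroot_mem i)
  rcases P.base _ hβ with ⟨c, hc⟩ | ⟨c, hc⟩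
  · have h2 := congrArg (P.coweight j) hc
    rw [map_sub, map_smul, P.coweight_sroot, P.coweight_sroot, P.coweight_sum] at h2
    simp [Ne.symm h] at h2
    have : (0:ℝ) ≤ c j := by positivity
    linarith
  · exfalso
    have h2 := congrArg (P.coweight i) hc
    rw [map_sub, map_smul, P.coweight_sroot, P.coweight_sroot, map_neg, P.coweight_sum] at h2
    simp [h] at h2
    have : (0:ℝ) ≤ c i := by positivity
    linarith

end RootSystemData

/-- Let `x ∈ Q(R)` be dominant and `z ∈ Q(R)` with `⟨z, ϖ_i⟩ ≤ ⟨x, ϖ_i⟩`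
for all `i`. Suppose `i₁, …, i_k ∈ I` are distinct indices such that
(b) `⟨z, α_{i₁}^∨⟩ = −1`, (c) `⟨z, α_{i_j}^∨⟩ = 0` for `j = 2, …, k`, and
(d) `⟨α_{i_j}, α_{i_{j+1}}^∨⟩ = −1` for `j = 1, …, k−1`, and suppose that
`z' := z + α_{i₁} + ⋯ + α_{i_k}` is dominant. Then `⟨z', ϖ_i⟩ ≤ ⟨x, ϖ_i⟩` for all `i ∈ I`. -/
theorem statement2 {ι V : Type*} [Fintype ι] [DecidableEq ι] [AddCommGroup V] [Module ℝ V]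
    (P : RootSystemData ι V) (x z : V)
    (hx : x ∈ P.rootLattice) (hxdom : P.IsDominant x)
    (hzQ : z ∈ P.rootLattice)
    (hzx : ∀ i, P.coweight i z ≤ P.coweight i x)
    (k : ℕ) (hk : 0 < k) (ind : Fin k → ι) (hinj : Function.Injective ind)
    (hb : P.coroot (P.sroot (ind ⟨0, hk⟩)) z = -1)
    (hc : ∀ j : Fin k, 0 < j.1 → P.coroot (P.sroot (ind j)) z = 0)
    (hd : ∀ j : ℕ, ∀ hj : j + 1 < k,
      P.coroot (P.sroot (ind ⟨j + 1, hj⟩)) (P.sroot (ind ⟨j, Nat.lt_of_succ_lt hj⟩)) = -1)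
    (hdom : P.IsDominant (z + ∑ j : Fin k, P.sroot (ind j))) :
    ∀ i, P.coweight i (z + ∑ j : Fin k, P.sroot (ind j)) ≤ P.coweight i x := by
  classical
  have hmem : x - z ∈ P.rootLattice := sub_mem hx hzQ
  set y := x - z with hy
  have hcw : ∀ i, P.coweight i y = P.coweight i x - P.coweight i z := fun i => map_sub _ _ _
  have hnn : ∀ i, 0 ≤ P.coweight i y := fun i => by rw [hcw]; linarith [hzx i]
  have claim : ∀ m : ℕ, ∀ hm : m < k, 0 < P.coweight (ind ⟨m, hm⟩) y := by
    intro m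
    induction m using Nat.strong_induction_on with
    | _ m IH =>
      intro hm
      by_contra hle
      push_neg at hle
      have h0 : P.coweight (ind ⟨m, hm⟩) y = 0 := le_antisymm hle (hnn _)
      have hpair : P.coroot (P.sroot (ind ⟨m, hm⟩)) y
          = ∑ i, P.coweight i y * P.coroot (P.sroot (ind ⟨m, hm⟩)) (P.sroot i) := by
        conv_lhs => rw [P.coweight_repr y]
        rw [map_sum]
        simp only [map_smul, smul_eq_mul]
      have hterm : ∀ i ∈ Finset.univ,
          P.coweight i y * P.coroot (P.sroot (ind ⟨m, hm⟩)) (P.sroot i) ≤ 0 := by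
        intro i _
        by_cases hi : i = ind ⟨m, hm⟩
        · rw [hi, h0]; simp
        · exact mul_nonpos_iff.mpr (Or.inl ⟨hnn i, P.offdiag hi⟩)
      have hsle : P.coroot (P.sroot (ind ⟨m, hm⟩)) y ≤ 0 := by
        rw [hpair]; exact Finset.sum_nonpos hterm
      rcases Nat.eq_zero_or_pos m with hm0 | hmpos
      · subst hm0
        have hv : P.coroot (P.sroot (ind ⟨0, hm⟩)) y
            = P.coroot (P.sroot (ind ⟨0, hm⟩)) x + 1 := by
          rw [hy, map_sub, show (⟨0, hm⟩ : Fin k) = ⟨0, hk⟩ from rfl, hb]; ring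
        linarith [hxdom (ind ⟨0, hm⟩)]
      · have hv : P.coroot (P.sroot (ind ⟨m, hm⟩)) y
            = P.coroot (P.sroot (ind ⟨m, hm⟩)) x := by
          rw [hy, map_sub, hc ⟨m, hm⟩ hmpos]; ring
        have h0' : P.coroot (P.sroot (ind ⟨m, hm⟩)) y = 0 :=
          le_antisymm hsle (by rw [hv]; exact hxdom _)
        have hall := (Finset.sum_eq_zero_iff_of_nonpos hterm).mp (by rw [← hpair]; exact h0')
        obtain ⟨m', rfl⟩ := Nat.exists_eq_succ_of_ne_zero (Nat.pos_iff_ne_zero.mp hmpos)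
        have ht := hall (ind ⟨m', Nat.lt_of_succ_lt hm⟩) (Finset.mem_univ _)
        rw [hd m' hm] at ht
        have hIH := IH m' (Nat.lt_succ_self m') (Nat.lt_of_succ_lt hm)
        nlinarith [ht, hIH]
  intro i
  rw [map_add, map_sum]
  simp only [P.coweight_sroot]
  by_cases hi : ∃ j, ind j = i
  · obtain ⟨j0, hj0⟩ := hi
    have hsum : (∑ j : Fin k, if i = ind j then (1:ℝ) else 0) = 1 := by
      rw [Finset.sum_eq_single j0]
      · simp [hj0]
      · intro j _ hj
        rw [if_neg]
        intro h'
        exact hj (hinj (hj0.trans h')).symm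
      · simp
    rw [hsum]
    obtain ⟨n, hn⟩ := P.coweight_int hmem i
    have hpos : 0 < P.coweight i y := by
      have := claim j0.1 j0.2
      simp only [Fin.eta] at this
      rwa [hj0] at this
    have h1 : (1:ℝ) ≤ P.coweight i y := by
      rw [hn] at hpos ⊢
      have : (0:ℤ) < n := by exact_mod_cast hpos
      exact_mod_cast this
    have := hcw i
    linarith
  · push_neg at hi
    have hsum : (∑ j : Fin k, if i = ind j then (1:ℝ) else 0) = 0 := by
      apply Finset.sum_eq_zero
      intro j _
      exact if_neg fun h' => hi j h'.symm
    rw [hsum]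
    simpa using hzx i
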